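/- If the Fourier coefficients of f are absolutely summable, ∑_{k∈ℤ}|a_k| < ∞, with partial-sum tails ε_m = ∑_{|k|>m}|a_k|, then for every m < n/2 and every j, the j-th eigenvalue of the Frobenius-optimal circulant c(T_n(f)) satisfies |λ_j(c(T_n(f))) − f(2πj/n)| ≤ (∑_{k=0}^{m−1} ε_k + (n−m) ε_m)/n. -/

import Mathlib

open Complex

/-- The tail `ε_m = ∑_{|k|>m} |a_k|` of the absolute Fourier series. -/
noncomputable def fourierTail (a : ℤ → ℂ) (m : ℕ) : ℝ :=
  ∑' k : ℤ, if (m : ℤ) < |k| then ‖a k‖ else 0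

namespace FrobAux

/-- positive one-sided tail `∑_{k>q} |a_k|` -/
noncomputable def ftp (a : ℤ → ℂ) (q : ℤ) : ℝ :=
  ∑' k : ℤ, if q < k then ‖a k‖ else 0

/-- negative one-sided tail `∑_{k<-q} |a_k|` -/
noncomputable def ftm (a : ℤ → ℂ) (q : ℤ) : ℝ :=
  ∑' k : ℤ, if k < -q then ‖a k‖ else 0

lemma summable_if (a : ℤ → ℂ) (hsum : Summable fun k : ℤ => ‖a k‖)
    (P : ℤ → Prop) [DecidablePred P] :
    Summable (fun k : ℤ => if P k then ‖a k‖ else 0) := by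
  have h : (fun k : ℤ => if P k then ‖a k‖ else 0)
      = Set.indicator {k | P k} (fun k => ‖a k‖) := by
    funext k
    simp [Set.indicator_apply, Set.mem_setOf_eq]
  rw [h]
  exact hsum.indicator _

lemma tail_split (a : ℤ → ℂ) (hsum : Summable fun k : ℤ => ‖a k‖) (m : ℕ) :
    fourierTail a m = ftp a m + ftm a m := by
  classical
  rw [fourierTail, ftp, ftm,
    ← Summable.tsum_add (summable_if a hsum _) (summable_if a hsum _)]
  refine tsum_congr fun k => ?_
  rcases le_or_gt 0 k with hk | hk
  · rw [abs_of_nonneg hk]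
    split_ifs <;> first | ring1 | (exfalso; omega)
  · rw [abs_of_neg hk]
    split_ifs <;> first | ring1 | (exfalso; omega)

lemma tail_mono (a : ℤ → ℂ) (hsum : Summable fun k : ℤ => ‖a k‖)
    {m l : ℕ} (h : m ≤ l) : fourierTail a l ≤ fourierTail a m := by
  classical
  refine Summable.tsum_le_tsum (fun k => ?_) (summable_if a hsum _) (summable_if a hsum _)
  have hk0 : (0:ℝ) ≤ ‖a k‖ := norm_nonneg _
  split_ifs <;> first | linarith | (exfalso; omega)

end FrobAux

open FrobAux in
/-- If `∑_{k∈ℤ}|a_k| < ∞` with tails `ε_m = ∑_{|k|>m}|a_k|`, then for every `m < n/2` and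
every `j`, the `j`-th eigenvalue `λ_j = (1/n)∑_{l=0}^{n−1}∑_{k=−n+1+l}^{l} a_k e^{2πijk/n}`
of the Frobenius-optimal circulant `c(T_n(f))` satisfies
`|λ_j − f(2πj/n)| ≤ (∑_{k=0}^{m−1} ε_k + (n−m) ε_m)/n`, where `f(θ) = ∑_k a_k e^{ikθ}`. -/
theorem frobenius_optimal_circulant_eigenvalue_error (n : ℕ) (hn : 0 < n) (a : ℤ → ℂ)
    (hsum : Summable (fun k : ℤ => ‖a k‖))
    (m : ℕ) (hm : 2 * m < n) (j : Fin n) :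
    ‖((1 / (n : ℂ)) * ∑ l : Fin n, ∑ k ∈ Finset.Icc ((l.val : ℤ) - n + 1) (l.val : ℤ),
            a k * Complex.exp (2 * Real.pi * I * j.val * k / n)
          - ∑' k : ℤ, a k * Complex.exp (I * k * (2 * Real.pi * j.val / n)))‖ ≤
      ((∑ k ∈ Finset.range m, fourierTail a k) + ((n : ℝ) - m) * fourierTail a m) / n := by
  classical
  have hn' : (0:ℝ) < n := by exact_mod_cast hn
  set g : ℤ → ℂ := fun k => a k * Complex.exp (2 * Real.pi * I * j.val * k / n) with hg
  -- |g k| = |a k|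
  have hgnorm : ∀ k : ℤ, ‖g k‖ = ‖a k‖ := by
    intro k
    have he : (2 * (Real.pi:ℂ) * I * (j.val:ℂ) * (k:ℂ) / (n:ℂ))
        = ((2 * Real.pi * (j.val:ℝ) * (k:ℝ) / (n:ℝ) : ℝ) : ℂ) * I := by
      push_cast; ring
    rw [hg]
    simp only [norm_mul]
    rw [he, Complex.norm_exp_ofReal_mul_I, mul_one]
  have hsg : Summable g := by
    apply Summable.of_norm
    simpa only [hgnorm] using hsum
  set S : ℂ := ∑' k, g k with hSdef
  -- rewrite the tsum in the goal
  have hStsum : (∑' k : ℤ, a k * Complex.exp (I * k * (2 * Real.pi * j.val / n))) = S := by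
    rw [hSdef]
    refine tsum_congr fun k => ?_
    rw [hg]
    have : (I * (k:ℂ) * (2 * (Real.pi:ℂ) * (j.val:ℂ) / (n:ℂ)))
        = 2 * (Real.pi:ℂ) * I * (j.val:ℂ) * (k:ℂ) / (n:ℂ) := by ring
    rw [this]
  rw [hStsum]
  -- pull out 1/n
  have hsplit : (1 / (n : ℂ)) * (∑ l : Fin n, ∑ k ∈ Finset.Icc ((l.val : ℤ) - n + 1) (l.val : ℤ), g k) - S
      = (1 / (n : ℂ)) * ∑ l : Fin n,
          ((∑ k ∈ Finset.Icc ((l.val : ℤ) - n + 1) (l.val : ℤ), g k) - S) := by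
    rw [Finset.sum_sub_distrib, Finset.sum_const, Finset.card_univ, Fintype.card_fin,
      nsmul_eq_mul, mul_sub]
    congr 1
    have hnC : (n:ℂ) ≠ 0 := by exact_mod_cast hn.ne'
    field_simp
  rw [hsplit]
  -- per-l bound
  have hDl : ∀ l : Fin n,
      ‖(∑ k ∈ Finset.Icc ((l.val : ℤ) - n + 1) (l.val : ℤ), g k) - S‖
        ≤ ftp a l.val + ftm a ((n:ℤ) - 1 - l.val) := by
    intro l
    set s : Finset ℤ := Finset.Icc ((l.val : ℤ) - n + 1) (l.val : ℤ) with hsdef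
    have h1 : (∑ k ∈ s, g k) - S = -∑' k : ((s : Set ℤ)ᶜ : Set ℤ), g k := by
      rw [hSdef, ← Summable.sum_add_tsum_compl (s := s) hsg]
      ring
    rw [h1, norm_neg]
    have hsub : Summable fun k : ((s : Set ℤ)ᶜ : Set ℤ) => ‖g k‖ := by
      have := (show Summable fun k : ℤ => ‖g k‖ by simpa only [hgnorm] using hsum).subtype
        (((s : Set ℤ)ᶜ : Set ℤ))
      exact this
    calc ‖∑' k : ((s : Set ℤ)ᶜ : Set ℤ), g k‖
        ≤ ∑' k : ((s : Set ℤ)ᶜ : Set ℤ), ‖g k‖ := norm_tsum_le_tsum_norm hsub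
      _ = ∑' k : ((s : Set ℤ)ᶜ : Set ℤ), ‖a k‖ := tsum_congr fun k => hgnorm k
      _ = ∑' k : ℤ, Set.indicator ((s : Set ℤ)ᶜ) (fun k => ‖a k‖) k := by
            exact tsum_subtype ((s : Set ℤ)ᶜ) (fun k => ‖a k‖)
      _ ≤ ftp a l.val + ftm a ((n:ℤ) - 1 - l.val) := by
            rw [ftp, ftm, ← Summable.tsum_add (summable_if a hsum _) (summable_if a hsum _)]
            refine Summable.tsum_le_tsum (fun k => ?_) (hsum.indicator _)
              ((summable_if a hsum _).add (summable_if a hsum _))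
            have hk0 : (0:ℝ) ≤ ‖a k‖ := norm_nonneg _
            by_cases hks : k ∈ ((s : Set ℤ)ᶜ : Set ℤ)
            · rw [Set.indicator_of_mem hks]
              have hnot : ¬((l.val : ℤ) - n + 1 ≤ k ∧ k ≤ (l.val : ℤ)) := by
                simpa [hsdef, Finset.mem_Icc] using hks
              split_ifs <;> first | linarith | (exfalso; omega)
            · rw [Set.indicator_of_notMem hks]
              split_ifs <;> linarith
  -- assemble
  calc ‖(1 / (n : ℂ)) * ∑ l : Fin n,
          ((∑ k ∈ Finset.Icc ((l.val : ℤ) - n + 1) (l.val : ℤ), g k) - S)‖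
      = (1/(n:ℝ)) * ‖∑ l : Fin n,
          ((∑ k ∈ Finset.Icc ((l.val : ℤ) - n + 1) (l.val : ℤ), g k) - S)‖ := by
        rw [norm_mul]
        congr 1
        simp [norm_div, _root_.abs_of_nonneg hn'.le]
    _ ≤ (1/(n:ℝ)) * ∑ l : Fin n,
          ‖(∑ k ∈ Finset.Icc ((l.val : ℤ) - n + 1) (l.val : ℤ), g k) - S‖ := by
        apply mul_le_mul_of_nonneg_left (norm_sum_le _ _)
        positivity
    _ ≤ (1/(n:ℝ)) * ∑ l : Fin n, (ftp a l.val + ftm a ((n:ℤ) - 1 - l.val)) := by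
        apply mul_le_mul_of_nonneg_left (Finset.sum_le_sum fun l _ => hDl l)
        positivity
    _ = (1/(n:ℝ)) * ∑ l ∈ Finset.range n, fourierTail a l := by
        congr 1
        rw [Fin.sum_univ_eq_sum_range (fun l : ℕ => ftp a l + ftm a ((n:ℤ) - 1 - l)) n]
        rw [Finset.sum_add_distrib]
        have h2 : ∑ l ∈ Finset.range n, ftm a ((n:ℤ) - 1 - l)
            = ∑ l ∈ Finset.range n, ftm a l := by
          have hc : ∀ l ∈ Finset.range n, ftm a ((n:ℤ) - 1 - l)
              = (fun i : ℕ => ftm a i) (n - 1 - l) := by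
            intro l hl
            rw [Finset.mem_range] at hl
            congr 1
            omega
          rw [Finset.sum_congr rfl hc]
          exact Finset.sum_range_reflect (fun i : ℕ => ftm a i) n
        rw [h2, ← Finset.sum_add_distrib]
        exact (Finset.sum_congr rfl fun l _ => (tail_split a hsum l).symm)
    _ ≤ (1/(n:ℝ)) * ((∑ k ∈ Finset.range m, fourierTail a k)
          + ((n : ℝ) - m) * fourierTail a m) := by
        apply mul_le_mul_of_nonneg_left ?_ (by positivity)
        have hmn : m ≤ n := by omega
        rw [← Finset.sum_range_add_sum_Ico _ hmn]
        gcongr with l hl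
        · calc ∑ l ∈ Finset.Ico m n, fourierTail a l
              ≤ ∑ _l ∈ Finset.Ico m n, fourierTail a m :=
                Finset.sum_le_sum fun l hl =>
                  tail_mono a hsum (Finset.mem_Ico.mp hl).1
            _ = ((n:ℝ) - m) * fourierTail a m := by
                rw [Finset.sum_const, Nat.card_Ico, nsmul_eq_mul]
                congr 1
                push_cast [Nat.cast_sub hmn]
                ring
    _ = ((∑ k ∈ Finset.range m, fourierTail a k) + ((n : ℝ) - m) * fourierTail a m) / n := by
        ring
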